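/- In the two-market SMSPG, the source is indifferent between the high price strategy (utility (a₁ - a_s)²/8) and the low price strategy (utility (a₁ + a₂ - 2a_s)²/16) exactly when a₁ = (1 + √2) a₂ - √2 a_s; moreover for a₁ < (1+√2)a₂ - √2 a_s (with a₁ > a₂ > a_s) the low price strategy dominates, and for a₁ > (1+√2)a₂ - √2 a_s the high price strategy dominates. -/

import Mathlib

/-- Two-market SMSPG: high-price utility H = (a₁ - a_s)²/8 versus low-price
utility L = (a₁ + a₂ - 2a_s)²/16; indifference exactly at
a₁ = (1+√2)a₂ - √2 a_s, with the low price strategy dominating below it and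
the high price strategy dominating above it. -/
theorem stmt_19 (a1 a2 as : ℝ) (h1 : a2 < a1) (h2 : as < a2) (h3 : 0 < as) :
    ((a1 - as)^2/8 = (a1 + a2 - 2*as)^2/16 ↔
      a1 = (1 + Real.sqrt 2) * a2 - Real.sqrt 2 * as) ∧
    ((a1 - as)^2/8 < (a1 + a2 - 2*as)^2/16 ↔
      a1 < (1 + Real.sqrt 2) * a2 - Real.sqrt 2 * as) ∧
    ((a1 + a2 - 2*as)^2/16 < (a1 - as)^2/8 ↔
      (1 + Real.sqrt 2) * a2 - Real.sqrt 2 * as < a1) := by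
  set s := Real.sqrt 2 with hsdef
  have hs : s ^ 2 = 2 := Real.sq_sqrt (by norm_num)
  have hs0 : 0 ≤ s := Real.sqrt_nonneg 2
  have hs1 : 1 < s := by nlinarith
  have hx : (0:ℝ) < a1 - as := by linarith
  have hy : (0:ℝ) < a1 + a2 - 2*as := by linarith
  -- squared comparison reduces to linear comparison
  have key : ∀ u v : ℝ, 0 ≤ u → 0 ≤ v → (u^2 < v^2 ↔ u < v) := by
    intro u v hu hv
    exact pow_lt_pow_iff_left₀ hu hv (by norm_num)
  have hsq : s * (a1 - as) ≥ 0 := by positivity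
  have hA : (a1 - as)^2/8 < (a1 + a2 - 2*as)^2/16 ↔
      (s*(a1-as))^2 < (a1 + a2 - 2*as)^2 := by
    constructor <;> intro h <;> nlinarith
  have hB : (a1 + a2 - 2*as)^2/16 < (a1 - as)^2/8 ↔
      (a1 + a2 - 2*as)^2 < (s*(a1-as))^2 := by
    constructor <;> intro h <;> nlinarith
  have hlinA : s*(a1-as) < a1 + a2 - 2*as ↔ a1 < (1 + s) * a2 - s * as := by
    constructor <;> intro h <;> nlinarith [mul_pos (sub_pos.mpr hs1) hx]
  have hlinB : a1 + a2 - 2*as < s*(a1-as) ↔ (1 + s) * a2 - s * as < a1 := by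
    constructor <;> intro h <;> nlinarith [mul_pos (sub_pos.mpr hs1) hx]
  have hlt : (a1 - as)^2/8 < (a1 + a2 - 2*as)^2/16 ↔
      a1 < (1 + s) * a2 - s * as := by
    rw [hA, key _ _ hsq hy.le, hlinA]
  have hgt : (a1 + a2 - 2*as)^2/16 < (a1 - as)^2/8 ↔
      (1 + s) * a2 - s * as < a1 := by
    rw [hB, key _ _ hy.le hsq, hlinB]
  refine ⟨?_, hlt, hgt⟩
  constructor
  · intro h
    by_contra hne
    rcases (Ne.lt_or_gt hne) with hl | hl
    · have := hlt.mpr hl; linarith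
    · have := hgt.mpr hl; linarith
  · intro h
    by_contra hne
    rcases (Ne.lt_or_gt hne) with hl | hl
    · have := hlt.mp hl; linarith
    · have := hgt.mp hl; linarith
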